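/- Let Q be a right Bol loop of order 27 that is not an abelian group (i.e., · fails to be simultaneously associative and commutative). Then every normal subloop N of Q with |N| = 3 satisfies N = Z(Q). -/

import Mathlib

/-- A loop: a set with binary operation and identity element in which all left and
right translations are bijective. -/
class QLoop (Q : Type*) extends Mul Q, One Q where
  one_mul : ∀ x : Q, 1 * x = x
  mul_one : ∀ x : Q, x * 1 = x
  bij_left : ∀ a : Q, Function.Bijective (fun x : Q => a * x)
  bij_right : ∀ a : Q, Function.Bijective (fun x : Q => x * a)

/-- The right Bol identity. -/
def IsRightBol (Q : Type*) [QLoop Q] : Prop :=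
  ∀ x y z : Q, ((x * y) * z) * y = x * ((y * z) * y)

/-- Left translation as a permutation. -/
noncomputable def Lt {Q : Type*} [QLoop Q] (a : Q) : Equiv.Perm Q :=
  Equiv.ofBijective (fun x : Q => a * x) (QLoop.bij_left a)

/-- Right translation as a permutation. -/
noncomputable def Rt {Q : Type*} [QLoop Q] (a : Q) : Equiv.Perm Q :=
  Equiv.ofBijective (fun x : Q => x * a) (QLoop.bij_right a)

/-- The right multiplication group. -/
noncomputable def rightMultGroup (Q : Type*) [QLoop Q] : Subgroup (Equiv.Perm Q) :=
  Subgroup.closure (Set.range (Rt : Q → Equiv.Perm Q))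

/-- The right inner mapping group, generated by R_{x,y} = R_{y x}⁻¹ ∘ R_x ∘ R_y. -/
noncomputable def rightInn (Q : Type*) [QLoop Q] : Subgroup (Equiv.Perm Q) :=
  Subgroup.closure { φ : Equiv.Perm Q | ∃ x y : Q, φ = (Rt (y * x))⁻¹ * Rt x * Rt y }

/-- The inner mapping group, generated by R_{x,y}, L_{x,y} and T_x. -/
noncomputable def innGroup (Q : Type*) [QLoop Q] : Subgroup (Equiv.Perm Q) :=
  Subgroup.closure
    ({ φ : Equiv.Perm Q | ∃ x y : Q, φ = (Rt (y * x))⁻¹ * Rt x * Rt y } ∪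
     { φ : Equiv.Perm Q | ∃ x y : Q, φ = (Lt (x * y))⁻¹ * Lt x * Lt y } ∪
     { φ : Equiv.Perm Q | ∃ x : Q, φ = (Lt x)⁻¹ * Rt x })

/-- A subloop: contains 1, closed under multiplication and both divisions. -/
structure IsSubloop {Q : Type*} [QLoop Q] (S : Set Q) : Prop where
  one_mem : (1 : Q) ∈ S
  mul_mem : ∀ ⦃a b : Q⦄, a ∈ S → b ∈ S → a * b ∈ S
  ldiv_mem : ∀ ⦃a x : Q⦄, a ∈ S → a * x ∈ S → x ∈ S
  rdiv_mem : ∀ ⦃a y : Q⦄, a ∈ S → y * a ∈ S → y ∈ S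

/-- A normal subloop: a subloop invariant under all inner mappings. -/
def IsNormalSubloop {Q : Type*} [QLoop Q] (S : Set Q) : Prop :=
  IsSubloop S ∧ ∀ φ ∈ innGroup Q, (φ : Equiv.Perm Q) '' S = S

/-- The commutant. -/
def commutant (Q : Type*) [QLoop Q] : Set Q := { a : Q | ∀ y : Q, a * y = y * a }

/-- The left nucleus. -/
def leftNucleus (Q : Type*) [QLoop Q] : Set Q :=
  { a : Q | ∀ y z : Q, a * (y * z) = (a * y) * z }

/-- The center. -/
def loopCenter (Q : Type*) [QLoop Q] : Set Q :=
  { a : Q | ∀ y z : Q, a * y = y * a ∧ a * (y * z) = (a * y) * z ∧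
      y * (a * z) = (y * a) * z ∧ y * (z * a) = (y * z) * a }

/-- Powers: x^0 = 1, x^{n+1} = x^n * x. -/
def lpow {Q : Type*} [QLoop Q] (x : Q) : ℕ → Q
  | 0 => 1
  | n + 1 => lpow x n * x

/-- The subloop generated by an element. -/
def subloopClosure {Q : Type*} [QLoop Q] (x : Q) : Set Q :=
  ⋂₀ { S : Set Q | IsSubloop S ∧ x ∈ S }

/-- Power associativity: the subloop generated by any element is associative. -/
def PowerAssociative (Q : Type*) [QLoop Q] : Prop :=
  ∀ x : Q, ∀ a ∈ subloopClosure x, ∀ b ∈ subloopClosure x, ∀ c ∈ subloopClosure x,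
    a * (b * c) = (a * b) * c

section Basic
variable {Q : Type*} [QLoop Q]

theorem qone_mul (x : Q) : 1 * x = x := QLoop.one_mul x
theorem qmul_one (x : Q) : x * 1 = x := QLoop.mul_one x

theorem qmul_left_cancel {a x y : Q} (h : a * x = a * y) : x = y :=
  (QLoop.bij_left a).1 h

theorem qmul_right_cancel {a x y : Q} (h : x * a = y * a) : x = y :=
  (QLoop.bij_right a).1 h

theorem lpow_zero (x : Q) : lpow x 0 = 1 := rfl
theorem lpow_succ (x : Q) (n : ℕ) : lpow x (n + 1) = lpow x n * x := rfl
theorem lpow_one' (x : Q) : lpow x 1 = x := by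
  show lpow x 0 * x = x
  rw [lpow_zero, qone_mul]

theorem lpow_AB (hbol : IsRightBol Q) (x : Q) :
    ∀ n : ℕ, (∀ u : Q, u * lpow x (n + 1) = (u * lpow x n) * x)
       ∧ (∀ u : Q, u * lpow x (n + 1) = (u * x) * lpow x n) := by
  intro n
  induction n with
  | zero =>
    constructor <;> intro u <;> rw [lpow_one', lpow_zero, qmul_one]
  | succ n ih =>
    obtain ⟨A, B⟩ := ih
    have Qn : x * lpow x n = lpow x (n + 1) := by
      have h := B 1
      rw [qone_mul, qone_mul] at h
      exact h.symm
    have key : ∀ u : Q, u * lpow x (n + 2) = ((u * x) * lpow x n) * x := by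
      intro u
      have h1 : lpow x (n + 2) = (x * lpow x n) * x := by
        rw [Qn]; rfl
      rw [h1, ← hbol u x (lpow x n)]
    constructor
    · intro u
      rw [key u, ← B u]
    · intro u
      rw [key u, ← A (u * x)]

theorem mul_lpow_succ (hbol : IsRightBol Q) (x u : Q) (n : ℕ) :
    u * lpow x (n + 1) = (u * lpow x n) * x := (lpow_AB hbol x n).1 u

theorem lpow_add (hbol : IsRightBol Q) (x : Q) (m n : ℕ) :
    lpow x (m + n) = lpow x m * lpow x n := by
  induction n with
  | zero => rw [Nat.add_zero, lpow_zero, qmul_one]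
  | succ n ih =>
    rw [← Nat.add_assoc, lpow_succ, ih, mul_lpow_succ hbol]

theorem mul_lpow_add (hbol : IsRightBol Q) (u x : Q) (m n : ℕ) :
    u * lpow x (m + n) = (u * lpow x m) * lpow x n := by
  induction n with
  | zero => rw [Nat.add_zero, lpow_zero, qmul_one]
  | succ n ih =>
    rw [← Nat.add_assoc, mul_lpow_succ hbol, ih, mul_lpow_succ hbol]

theorem lpow_lpow (hbol : IsRightBol Q) (x : Q) (k m : ℕ) :
    lpow (lpow x k) m = lpow x (k * m) := by
  induction m with
  | zero => rw [Nat.mul_zero]; rfl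
  | succ m ih =>
    rw [lpow_succ, ih, ← lpow_add hbol, Nat.mul_succ]

/-- even card from a free involution -/
theorem even_card_of_free_invol {α : Type*} [DecidableEq α] (g : α → α)
    (h2 : ∀ x, g (g x) = x) (hf : ∀ x, g x ≠ x) :
    ∀ s : Finset α, (∀ x ∈ s, g x ∈ s) → Even s.card := by
  intro s
  induction s using Finset.strongInduction with
  | _ s ih =>
    intro hcl
    rcases s.eq_empty_or_nonempty with rfl | ⟨x, hx⟩
    · simp
    · have hgx : g x ∈ s := hcl x hx
      have hxgx : x ≠ g x := fun h => hf x h.symm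
      have hpair : ({x, g x} : Finset α) ⊆ s := by
        intro y hy
        rcases Finset.mem_insert.1 hy with rfl | hy
        · exact hx
        · rcases Finset.mem_singleton.1 hy with rfl
          exact hgx
      have hss : s \ {x, g x} ⊂ s := by
        refine Finset.ssubset_iff_of_subset Finset.sdiff_subset |>.2 ⟨x, hx, ?_⟩
        simp
      have hcl' : ∀ y ∈ s \ {x, g x}, g y ∈ s \ {x, g x} := by
        intro y hy
        rw [Finset.mem_sdiff] at hy ⊢
        refine ⟨hcl y hy.1, ?_⟩
        simp only [Finset.mem_insert, Finset.mem_singleton] at hy ⊢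
        push_neg at hy ⊢
        constructor
        · intro h
          exact hy.2.2 (by rw [← h2 y, h])
        · intro h
          apply hy.2.1
          have := congrArg g h
          rwa [h2, h2] at this
      have heven := ih _ hss hcl'
      have hcards : (s \ {x, g x}).card + 2 = s.card := by
        rw [Finset.card_sdiff_of_subset hpair]
        have h2c : ({x, g x} : Finset α).card = 2 := by
          rw [Finset.card_insert_of_notMem (by simpa using hxgx), Finset.card_singleton]
        rw [h2c]
        have : 2 ≤ s.card := by
          calc 2 = ({x, g x} : Finset α).card := h2c.symm
          _ ≤ s.card := Finset.card_le_card hpair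
        omega
      rw [← hcards]
      exact heven.add even_two

theorem no_involution (hbol : IsRightBol Q) (hcard : Nat.card Q = 27)
    {t : Q} (ht : t ≠ 1) (htt : t * t = 1) : False := by
  haveI : Finite Q := Nat.finite_of_card_ne_zero (by rw [hcard]; omega)
  haveI : Fintype Q := Fintype.ofFinite Q
  classical
  have h2 : ∀ u : Q, (u * t) * t = u := by
    intro u
    have := mul_lpow_succ hbol t u 1
    rw [lpow_one'] at this
    have h2' : lpow t 2 = t * t := by
      rw [lpow_succ, lpow_one']
    rw [h2', htt, qmul_one] at this
    exact this.symm
  have hf : ∀ u : Q, u * t ≠ u := by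
    intro u h
    apply ht
    exact qmul_left_cancel (by rw [qmul_one, h])
  have heven : Even (Finset.univ : Finset Q).card :=
    even_card_of_free_invol (fun u => u * t) h2 hf Finset.univ (fun x _ => Finset.mem_univ _)
  rw [Finset.card_univ, ← Nat.card_eq_fintype_card, hcard] at heven
  exact (by decide : ¬ Even 27) heven

theorem exists_spow_eq_one (hbol : IsRightBol Q) (hcard : Nat.card Q = 27) (x : Q) :
    ∃ n : ℕ, 0 < n ∧ lpow x n = 1 := by
  haveI : Finite Q := Nat.finite_of_card_ne_zero (by rw [hcard]; omega)
  obtain ⟨i, j, hij, hfij⟩ := Finite.exists_ne_map_eq_of_infinite (fun n : ℕ => lpow x n)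
  rcases Nat.lt_or_ge i j with h | h
  · refine ⟨j - i, by omega, ?_⟩
    have : lpow x (i + (j - i)) = lpow x i * lpow x (j - i) := lpow_add hbol x i (j - i)
    rw [Nat.add_sub_cancel' (by omega)] at this
    apply qmul_left_cancel (a := lpow x i)
    rw [← this, qmul_one]
    exact (hfij.symm : lpow x j = lpow x i)
  · have hji : j < i := by omega
    refine ⟨i - j, by omega, ?_⟩
    have : lpow x (j + (i - j)) = lpow x j * lpow x (i - j) := lpow_add hbol x j (i - j)
    rw [Nat.add_sub_cancel' (by omega)] at this
    apply qmul_left_cancel (a := lpow x j)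
    rw [← this, qmul_one]
    exact (hfij : lpow x i = lpow x j)

theorem exists_odd_order (hbol : IsRightBol Q) (hcard : Nat.card Q = 27) (x : Q) :
    ∃ o : ℕ, 0 < o ∧ lpow x o = 1 ∧ o % 2 = 1 := by
  classical
  have hex := exists_spow_eq_one hbol hcard x
  have hP : ∃ n, 0 < n ∧ lpow x n = 1 := hex
  set o := Nat.find hP with ho
  have hspec := Nat.find_spec hP
  refine ⟨o, hspec.1, hspec.2, ?_⟩
  by_contra hodd
  have heven : o % 2 = 0 := by omega
  set m := o / 2 with hm
  have hom : m + m = o := by omega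
  have hmpos : 0 < m := by
    rcases Nat.eq_zero_or_pos m with h | h
    · exfalso; have := hspec.1; omega
    · exact h
  have hmlt : m < o := by omega
  have hnot : ¬(0 < m ∧ lpow x m = 1) := Nat.find_min hP hmlt
  have hml : lpow x m ≠ 1 := fun h => hnot ⟨hmpos, h⟩
  have : lpow x m * lpow x m = 1 := by
    rw [← lpow_add hbol, hom]; exact hspec.2
  exact no_involution hbol hcard hml this

theorem sq_surj (hbol : IsRightBol Q) (hcard : Nat.card Q = 27) (q : Q) :
    ∃ v : Q, v * v = q := by
  obtain ⟨o, hpos, hone, hodd⟩ := exists_odd_order hbol hcard q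
  refine ⟨lpow q ((o + 1) / 2), ?_⟩
  have h1 : (o + 1) / 2 + (o + 1) / 2 = o + 1 := by omega
  rw [← lpow_add hbol, h1, lpow_succ, hone, qone_mul]

end Basic
section Core
variable {Q : Type*} [QLoop Q]

noncomputable def apow (a : Q) (i : ZMod 3) : Q := lpow a i.val

section Apow
variable {a : Q}

theorem lpow_one_base : ∀ k : ℕ, lpow (1 : Q) k = 1
  | 0 => rfl
  | k + 1 => by rw [lpow_succ, lpow_one_base k, qmul_one]

theorem lpow_a_3k (hbol : IsRightBol Q) (ha3 : lpow a 3 = 1) (k : ℕ) :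
    lpow a (3 * k) = 1 := by
  rw [← lpow_lpow hbol, ha3, lpow_one_base]

theorem mul_lpow_a_mod (hbol : IsRightBol Q) (ha3 : lpow a 3 = 1) (u : Q) (n : ℕ) :
    u * lpow a n = u * lpow a (n % 3) := by
  conv_lhs => rw [← Nat.div_add_mod n 3]
  rw [mul_lpow_add hbol, lpow_a_3k hbol ha3, qmul_one]

theorem apow_zero : apow a 0 = 1 := rfl

theorem apow_one : apow a 1 = a := by
  show lpow a (1 : ZMod 3).val = a
  rw [show (1 : ZMod 3).val = 1 from rfl, lpow_one']

theorem apow_two : apow a 2 = a * a := by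
  show lpow a (2 : ZMod 3).val = a * a
  rw [show (2 : ZMod 3).val = 2 from rfl, lpow_succ, lpow_one']

theorem apow_add (hbol : IsRightBol Q) (ha3 : lpow a 3 = 1) (i j : ZMod 3) :
    apow a (i + j) = apow a i * apow a j := by
  show lpow a ((i + j).val) = lpow a i.val * lpow a j.val
  rw [ZMod.val_add, ← lpow_add hbol]
  have := mul_lpow_a_mod hbol ha3 (1 : Q) (i.val + j.val)
  rw [qone_mul, qone_mul] at this
  exact this.symm

theorem mul_apow (hbol : IsRightBol Q) (ha3 : lpow a 3 = 1) (u : Q) (i j : ZMod 3) :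
    (u * apow a i) * apow a j = u * apow a (i + j) := by
  show (u * lpow a i.val) * lpow a j.val = u * lpow a ((i + j).val)
  rw [← mul_lpow_add hbol, ZMod.val_add, ← mul_lpow_a_mod hbol ha3]

theorem apow_inj (h1a : a ≠ 1) (h1aa : a * a ≠ 1) (haaa : a * a ≠ a)
    {i j : ZMod 3} (h : apow a i = apow a j) : i = j := by
  have hc : ∀ x : ZMod 3, x = 0 ∨ x = 1 ∨ x = 2 := by decide
  rcases hc i with rfl | rfl | rfl <;> rcases hc j with rfl | rfl | rfl <;>
    simp only [apow_zero, apow_one, apow_two] at h <;>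
    first
      | rfl
      | exact absurd h h1a
      | exact absurd h.symm h1a
      | exact absurd h h1aa
      | exact absurd h.symm h1aa
      | exact absurd h haaa
      | exact absurd h.symm haaa

end Apow
end Core
section Norm
variable {Q : Type*} [QLoop Q] {N : Set Q}

theorem Lt_apply (x u : Q) : Lt x u = x * u := rfl
theorem Rt_apply (x u : Q) : Rt x u = u * x := rfl

theorem Tgen_mem (x : Q) : ((Lt x)⁻¹ * Rt x) ∈ innGroup Q :=
  Subgroup.subset_closure (Set.mem_union_right _ ⟨x, rfl⟩)

theorem Lgen_mem (x y : Q) : ((Lt (x * y))⁻¹ * Lt x * Lt y) ∈ innGroup Q :=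
  Subgroup.subset_closure (Set.mem_union_left _ (Set.mem_union_right _ ⟨x, y, rfl⟩))

theorem Rgen_mem (x y : Q) : ((Rt (y * x))⁻¹ * Rt x * Rt y) ∈ innGroup Q :=
  Subgroup.subset_closure (Set.mem_union_left _ (Set.mem_union_left _ ⟨x, y, rfl⟩))

theorem mapN {φ : Equiv.Perm Q} (hφ : φ ∈ innGroup Q) (hN : IsNormalSubloop N)
    {n : Q} (hn : n ∈ N) : φ n ∈ N := by
  rw [← hN.2 φ hφ]
  exact Set.mem_image_of_mem _ hn

theorem move_nx (hN : IsNormalSubloop N) (x : Q) {n : Q} (hn : n ∈ N) :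
    ∃ n' ∈ N, n * x = x * n' := by
  refine ⟨((Lt x)⁻¹ * Rt x) n, mapN (Tgen_mem x) hN hn, ?_⟩
  have h := (Lt x).apply_symm_apply (Rt x n)
  rw [Equiv.Perm.mul_apply]
  rw [← Rt_apply x n, ← Lt_apply x]
  exact h.symm

theorem move_xn (hN : IsNormalSubloop N) (x : Q) {n : Q} (hn : n ∈ N) :
    ∃ n' ∈ N, x * n = n' * x := by
  have hinv : ((Lt x)⁻¹ * Rt x)⁻¹ ∈ innGroup Q := inv_mem (Tgen_mem x)
  set φ := (Lt x)⁻¹ * Rt x with hφ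
  refine ⟨φ⁻¹ n, mapN hinv hN hn, ?_⟩
  have h : φ (φ⁻¹ n) = n := φ.apply_symm_apply n
  have h2 : ∀ m : Q, m * x = x * φ m := by
    intro m
    have := (Lt x).apply_symm_apply (Rt x m)
    rw [← Rt_apply x m, ← Lt_apply x, hφ, Equiv.Perm.mul_apply]
    exact this.symm
  have := h2 (φ⁻¹ n)
  rw [h] at this
  exact this.symm

theorem move_L (hN : IsNormalSubloop N) (x y : Q) {m : Q} (hm : m ∈ N) :
    ∃ m' ∈ N, x * (y * m) = (x * y) * m' := by
  refine ⟨((Lt (x * y))⁻¹ * Lt x * Lt y) m, mapN (Lgen_mem x y) hN hm, ?_⟩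
  have h := (Lt (x * y)).apply_symm_apply (Lt x (Lt y m))
  rw [Equiv.Perm.mul_apply, Equiv.Perm.mul_apply]
  rw [← Lt_apply y m, ← Lt_apply x, ← Lt_apply (x * y)]
  exact h.symm

theorem move_R (hN : IsNormalSubloop N) (u y : Q) {n : Q} (hn : n ∈ N) :
    ∃ n' ∈ N, (n * u) * y = n' * (u * y) := by
  refine ⟨((Rt (u * y))⁻¹ * Rt y * Rt u) n, mapN (Rgen_mem y u) hN hn, ?_⟩
  have h := (Rt (u * y)).apply_symm_apply (Rt y (Rt u n))
  rw [Equiv.Perm.mul_apply, Equiv.Perm.mul_apply]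
  rw [← Rt_apply u n, ← Rt_apply y, ← Rt_apply (u * y)]
  exact h.symm

end Norm
section Memb
variable {Q : Type*} [QLoop Q] {N : Set Q} {a : Q}

theorem lpow_memN (hsub : IsSubloop N) (haN : a ∈ N) : ∀ n : ℕ, lpow a n ∈ N
  | 0 => hsub.one_mem
  | n + 1 => hsub.mul_mem (lpow_memN hsub haN n) haN

theorem apow_memN (hsub : IsSubloop N) (haN : a ∈ N) (i : ZMod 3) : apow a i ∈ N :=
  lpow_memN hsub haN i.val

theorem memN_rep (hNrep : N = {1, a, a * a}) {n : Q} (hn : n ∈ N) :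
    ∃ i : ZMod 3, n = apow a i := by
  rw [hNrep] at hn
  rcases hn with rfl | rfl | rfl
  · exact ⟨0, apow_zero.symm⟩
  · exact ⟨1, apow_one.symm⟩
  · exact ⟨2, apow_two.symm⟩

theorem memb (hbol : IsRightBol Q) (hN : IsNormalSubloop N) (haN : a ∈ N)
    (hNrep : N = {1, a, a * a}) (ha3 : lpow a 3 = 1) (u v : Q) (i j : ZMod 3) :
    ∃ k : ZMod 3, (u * apow a i) * (v * apow a j) = (u * v) * apow a k := by
  obtain ⟨m', hm'N, hL⟩ := move_L hN (u * apow a i) v (apow_memN hN.1 haN j)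
  obtain ⟨n1, hn1N, h1⟩ := move_xn hN u (apow_memN hN.1 haN i)
  obtain ⟨n2, hn2N, h2⟩ := move_R hN u v hn1N
  obtain ⟨n3, hn3N, h3⟩ := move_nx hN (u * v) hn2N
  obtain ⟨k1, hk1⟩ := memN_rep hNrep hn3N
  obtain ⟨k2, hk2⟩ := memN_rep hNrep hm'N
  refine ⟨k1 + k2, ?_⟩
  rw [hL, h1, h2, h3, hk1, hk2, mul_apow hbol ha3]

theorem Elemma (hbol : IsRightBol Q) (hN : IsNormalSubloop N) (haN : a ∈ N)
    (hNrep : N = {1, a, a * a}) (ha3 : lpow a 3 = 1)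
    (h1a : a ≠ 1) (h1aa : a * a ≠ 1) (haaa : a * a ≠ a) (u v : Q) :
    ∃ al be : ZMod 3, al ≠ 0 ∧ be ≠ 0 ∧
      ∀ i j : ZMod 3, (u * apow a i) * (v * apow a j) = (u * v) * apow a (al * i + be * j) := by
  choose g hg using memb hbol hN haN hNrep ha3 u v
  have hcan : ∀ k k' : ZMod 3, (u * v) * apow a k = (u * v) * apow a k' → k = k' :=
    fun k k' h => apow_inj h1a h1aa haaa (qmul_left_cancel h)
  have hg00 : g 0 0 = 0 := by
    apply hcan
    rw [← hg 0 0, apow_zero, qmul_one, qmul_one, qmul_one]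
  have hinji : ∀ j, Function.Injective (fun i => g i j) := by
    intro j i i' h
    simp only at h
    have heq : (u * apow a i) * (v * apow a j) = (u * apow a i') * (v * apow a j) := by
      rw [hg i j, hg i' j, h]
    have h2 : u * apow a i = u * apow a i' := qmul_right_cancel heq
    exact apow_inj h1a h1aa haaa (qmul_left_cancel h2)
  have hinjj : ∀ i, Function.Injective (g i) := by
    intro i j j' h
    have heq : (u * apow a i) * (v * apow a j) = (u * apow a i) * (v * apow a j') := by
      rw [hg i j, hg i j', h]
    have h2 : v * apow a j = v * apow a j' := qmul_left_cancel heq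
    exact apow_inj h1a h1aa haaa (qmul_left_cancel h2)
  -- affine structure
  have AFF1 : ∀ h : ZMod 3 → ZMod 3, Function.Injective h →
      ∀ i, h i = h 0 + (h 1 - h 0) * i := by decide
  have AVOID : ∀ c d : ZMod 3, (∀ j, c + d * j ≠ 0) → d = 0 := by decide
  have hrow : ∀ i j, g i j = g 0 j + (g 1 j - g 0 j) * i := by
    intro i j
    exact AFF1 (fun i => g i j) (hinji j) i
  have hg0 : ∀ j, g 0 j = g 0 1 * j := by
    intro j
    have := AFF1 (g 0) (hinjj 0) j
    rwa [hg00, zero_add, sub_zero] at this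
  have hg1 : ∀ j, g 1 j = g 1 0 + (g 1 1 - g 1 0) * j := fun j => AFF1 (g 1) (hinjj 1) j
  have hAne : ∀ j, g 1 j - g 0 j ≠ 0 := by
    intro j h
    have : g 1 j = g 0 j := by
      have := sub_eq_zero.mp h; exact this
    have := hinji j this
    exact one_ne_zero this
  have hAaff : ∀ j, g 1 j - g 0 j = g 1 0 + ((g 1 1 - g 1 0) - g 0 1) * j := by
    intro j
    rw [hg1 j, hg0 j]
    ring_nf
  have hd0 : (g 1 1 - g 1 0) - g 0 1 = 0 := by
    apply AVOID (g 1 0)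
    intro j h
    exact hAne j (by rw [hAaff j]; exact h)
  have hAconst : ∀ j, g 1 j - g 0 j = g 1 0 := by
    intro j
    rw [hAaff j, hd0, zero_mul, add_zero]
  refine ⟨g 1 0, g 0 1, ?_, ?_, ?_⟩
  · intro h
    have := hAne 0
    rw [hAconst 0] at this
    exact this h
  · intro h
    exact one_ne_zero (hinjj 0 (h.trans hg00.symm))
  · intro i j
    rw [hg i j, hrow i j, hAconst j, hg0 j]
    congr 1
    ring_nf
end Memb
section Fullf
variable {Q : Type*} [QLoop Q] {N : Set Q} {a : Q}

theorem fullf (hbol : IsRightBol Q) (hcard : Nat.card Q = 27)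
    (hN : IsNormalSubloop N) (haN : a ∈ N)
    (hNrep : N = {1, a, a * a}) (ha3 : lpow a 3 = 1)
    (h1a : a ≠ 1) (h1aa : a * a ≠ 1) (haaa : a * a ≠ a) :
    ∀ u v : Q, ∀ i j : ZMod 3,
      (u * apow a i) * (v * apow a j) = (u * v) * apow a (i + j) := by
  choose αf βf hα hβ hspec using Elemma hbol hN haN hNrep ha3 h1a h1aa haaa
  have key : ∀ u v w : Q, ∀ i j k : ZMod 3,
      αf ((u*v)*w) v * (αf (u*v) w * (αf u v * i + βf u v * j) + βf (u*v) w * k)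
        + βf ((u*v)*w) v * j
      = αf u ((v*w)*v) * i
        + βf u ((v*w)*v) * (αf (v*w) v * (αf v w * j + βf v w * k) + βf (v*w) v * j) := by
    intro u v w i j k
    have e1 := hspec u v i j
    have e2 := hspec (u*v) w (αf u v * i + βf u v * j) k
    have e3 := hspec ((u*v)*w) v (αf (u*v) w * (αf u v * i + βf u v * j) + βf (u*v) w * k) j
    have e4 := hspec v w j k
    have e5 := hspec (v*w) v (αf v w * j + βf v w * k) j
    have e6 := hspec u ((v*w)*v) i (αf (v*w) v * (αf v w * j + βf v w * k) + βf (v*w) v * j)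
    have hb := hbol (u * apow a i) (v * apow a j) (w * apow a k)
    rw [e1, e2, e3, e4, e5, e6, hbol u v w] at hb
    exact apow_inj h1a h1aa haaa (qmul_left_cancel hb)
  -- special values at second argument 1
  have sp1 : ∀ u : Q, αf u 1 = 1 := by
    intro u
    have h := hspec u 1 1 0
    rw [apow_zero, qmul_one, qmul_one, qmul_one] at h
    have h2 := apow_inj h1a h1aa haaa (qmul_left_cancel h)
    linear_combination -h2
  have sp2 : ∀ u : Q, βf u 1 = 1 := by
    intro u
    have h := hspec u 1 0 1
    rw [apow_zero, qmul_one, qone_mul] at h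
    have h2 := apow_inj h1a h1aa haaa (qmul_left_cancel h)
    linear_combination -h2
  -- B-identities
  have B1 : ∀ u v w : Q,
      αf ((u*v)*w) v * αf (u*v) w * αf u v = αf u ((v*w)*v) := by
    intro u v w
    linear_combination key u v w 1 0 0
  have B2 : ∀ u v w : Q,
      αf ((u*v)*w) v * αf (u*v) w * βf u v + βf ((u*v)*w) v
      = βf u ((v*w)*v) * αf (v*w) v * αf v w + βf u ((v*w)*v) * βf (v*w) v := by
    intro u v w
    linear_combination key u v w 0 1 0
  have B3 : ∀ u v w : Q,
      αf ((u*v)*w) v * βf (u*v) w = βf u ((v*w)*v) * αf (v*w) v * βf v w := by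
    intro u v w
    linear_combination key u v w 0 0 1
  -- (**)
  have hstar2 : ∀ u w : Q, αf u w + 1 = βf u w * (αf 1 w + 1) := by
    intro u w
    have h := B2 u 1 w
    simp only [qmul_one, qone_mul] at h
    rw [sp1 ((u*w)), sp2 (u*w), sp2 u, sp1 w, sp2 w] at h
    linear_combination h
  -- (*)
  have hstar1 : ∀ v w : Q, αf (v*w) v * αf v w * αf 1 v = αf 1 ((v*w)*v) := by
    intro v w
    have h := B1 1 v w
    simp only [qone_mul] at h
    exact h
  have DEC1 : ∀ p q s : ZMod 3, p ≠ 0 → q ≠ 0 → s ≠ 0 →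
      p + 1 = q * (s + 1) → p = s := by decide
  have halpha : ∀ u w : Q, αf u w = αf 1 w := fun u w =>
    DEC1 _ _ _ (hα u w) (hβ u w) (hα 1 w) (hstar2 u w)
  have DEC2 : ∀ s t : ZMod 3, s ≠ 0 → s * t * s = t := by decide
  have hsig : ∀ v w : Q, αf 1 ((v*w)*v) = αf 1 w := by
    intro v w
    rw [← hstar1 v w, halpha (v*w) v, halpha v w]
    exact DEC2 _ _ (hα 1 v)
  have hsq : ∀ v : Q, αf 1 (v * v) = 1 := by
    intro v
    have h := hsig v 1
    rw [qmul_one] at h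
    rw [h, sp1 1]
  have hall : ∀ q : Q, αf 1 q = 1 := by
    intro q
    obtain ⟨v, hv⟩ := sq_surj hbol hcard q
    rw [← hv, hsq v]
  have hαall : ∀ u w : Q, αf u w = 1 := fun u w => (halpha u w).trans (hall w)
  have DEC3 : ∀ q : ZMod 3, (1 : ZMod 3) + 1 = q * (1 + 1) → q = 1 := by decide
  have hβall : ∀ u w : Q, βf u w = 1 := by
    intro u w
    apply DEC3
    have h := hstar2 u w
    rwa [hαall u w, hall w] at h
  intro u v i j
  rw [hspec u v i j, hαall u v, hβall u v, one_mul, one_mul]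
end Fullf
section Center
variable {Q : Type*} [QLoop Q] {N : Set Q} {a : Q}

theorem cen1 {c : Q} (h : c ∈ loopCenter Q) (y : Q) : c * y = y * c := (h y y).1
theorem cen2 {c : Q} (h : c ∈ loopCenter Q) (y z : Q) : c * (y * z) = (c * y) * z := (h y z).2.1
theorem cen3 {c : Q} (h : c ∈ loopCenter Q) (y z : Q) : y * (c * z) = (y * c) * z := (h y z).2.2.1
theorem cen4 {c : Q} (h : c ∈ loopCenter Q) (y z : Q) : y * (z * c) = (y * z) * c := (h y z).2.2.2

theorem one_central : (1 : Q) ∈ loopCenter Q := fun y z =>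
  ⟨by rw [qone_mul, qmul_one], by rw [qone_mul, qone_mul],
   by rw [qone_mul, qmul_one], by rw [qmul_one, qmul_one]⟩

theorem mul_central {z w : Q} (hz : z ∈ loopCenter Q) (hw : w ∈ loopCenter Q) :
    z * w ∈ loopCenter Q := by
  refine fun y s => ⟨?_, ?_, ?_, ?_⟩
  · calc (z*w)*y = z*(w*y) := (cen2 hz w y).symm
    _ = z*(y*w) := by rw [cen1 hw y]
    _ = (z*y)*w := cen2 hz y w
    _ = (y*z)*w := by rw [cen1 hz y]
    _ = y*(z*w) := (cen4 hw y z).symm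
  · calc (z*w)*(y*s) = z*(w*(y*s)) := (cen2 hz w (y*s)).symm
    _ = z*((w*y)*s) := by rw [cen2 hw y s]
    _ = (z*(w*y))*s := cen2 hz (w*y) s
    _ = ((z*w)*y)*s := by rw [cen2 hz w y]
  · calc y*((z*w)*s) = y*(z*(w*s)) := by rw [cen2 hz w s]
    _ = (y*z)*(w*s) := cen3 hz y (w*s)
    _ = ((y*z)*w)*s := cen3 hw (y*z) s
    _ = (y*(z*w))*s := by rw [← cen4 hw y z]
  · calc y*(s*(z*w)) = y*((s*z)*w) := by rw [cen4 hw s z]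
    _ = (y*(s*z))*w := cen4 hw y (s*z)
    _ = ((y*s)*z)*w := by rw [cen4 hz y s]
    _ = (y*s)*(z*w) := (cen4 hw (y*s) z).symm

theorem lpow_central {z : Q} (hz : z ∈ loopCenter Q) : ∀ n : ℕ, lpow z n ∈ loopCenter Q
  | 0 => one_central
  | n + 1 => mul_central (lpow_central hz n) hz

theorem apow_central (hbol : IsRightBol Q) (hcard : Nat.card Q = 27)
    (hN : IsNormalSubloop N) (haN : a ∈ N)
    (hNrep : N = {1, a, a * a}) (ha3 : lpow a 3 = 1)
    (h1a : a ≠ 1) (h1aa : a * a ≠ 1) (haaa : a * a ≠ a) (i : ZMod 3) :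
    apow a i ∈ loopCenter Q := by
  have F := fullf hbol hcard hN haN hNrep ha3 h1a h1aa haaa
  have hA : ∀ (y : Q) (i : ZMod 3), apow a i * y = y * apow a i := by
    intro y i
    have h := F 1 y i 0
    rw [apow_zero, qmul_one, qone_mul, qone_mul, add_zero] at h
    exact h
  have hB : ∀ (y z : Q) (i : ZMod 3), y * (z * apow a i) = (y * z) * apow a i := by
    intro y z i
    have h := F y z 0 i
    rw [apow_zero, qmul_one, zero_add] at h
    exact h
  have hC : ∀ (y z : Q) (i : ZMod 3), (y * apow a i) * z = (y * z) * apow a i := by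
    intro y z i
    have h := F y z i 0
    rw [apow_zero, qmul_one, add_zero] at h
    exact h
  refine fun y z => ⟨hA y i, ?_, ?_, hB y z i⟩
  · rw [hA (y*z) i, hA y i, hC y z i]
  · rw [hA z i, hB y z i, hC y z i]
end Center
section PartII
variable {Q : Type*} [QLoop Q] {N : Set Q} {a : Q}

theorem center_subset_N (hbol : IsRightBol Q) (hcard : Nat.card Q = 27)
    (hna : ¬ ((∀ x y z : Q, x * (y * z) = (x * y) * z) ∧ (∀ x y : Q, x * y = y * x)))
    (hsub : IsSubloop N) (haN : a ∈ N)
    (hNrep : N = {1, a, a * a}) (ha3 : lpow a 3 = 1)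
    (h1a : a ≠ 1) (h1aa : a * a ≠ 1) (haaa : a * a ≠ a)
    (hcent : ∀ i : ZMod 3, apow a i ∈ loopCenter Q) :
    loopCenter Q ⊆ N := by
  haveI : Finite Q := Nat.finite_of_card_ne_zero (by rw [hcard]; omega)
  intro c hc
  by_contra hcN
  by_cases hall : ∀ q : Q, q ∈ loopCenter Q
  · exact hna ⟨fun x y z => ((cen2 (hall x) y z)).symm ▸ rfl, fun x y => cen1 (hall x) y⟩
  push_neg at hall
  obtain ⟨t, ht⟩ := hall
  -- powers of t of exponent 1,2 are not central
  have htpow : ∀ d : ℕ, 0 < d → d < 3 → lpow t d ∉ loopCenter Q := by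
    intro d hd1 hd2 hmem
    interval_cases d
    · rw [lpow_one'] at hmem; exact ht hmem
    · obtain ⟨ot, hotpos, hot1, hotodd⟩ := exists_odd_order hbol hcard t
      have h2m : 2 * ((ot + 1) / 2) = ot + 1 := by omega
      have hteq : lpow (lpow t 2) ((ot + 1) / 2) = t := by
        rw [lpow_lpow hbol, h2m, lpow_succ, hot1, qone_mul]
      exact ht (hteq ▸ lpow_central hmem ((ot + 1) / 2))
  -- inverses in the center
  have hinv : ∀ m : Q, m ∈ loopCenter Q → ∃ m' ∈ loopCenter Q, m * m' = 1 := by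
    intro m hm
    obtain ⟨om, hompos, hom1, _⟩ := exists_odd_order hbol hcard m
    refine ⟨lpow m (om - 1), lpow_central hm _, ?_⟩
    have h1 : lpow m ((om - 1) + 1) = 1 := by rw [Nat.sub_add_cancel hompos]; exact hom1
    rw [lpow_succ] at h1
    rw [cen1 hm (lpow m (om - 1))]
    exact h1
  -- key cancellation
  have hkey : ∀ (d : ℕ), d < 3 → ∀ m n : Q, m ∈ loopCenter Q → n ∈ loopCenter Q →
      lpow t d * m = n → d = 0 := by
    intro d hd m n hm hn heq
    by_contra hd0
    apply htpow d (by omega) hd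
    obtain ⟨m', hm', hmm'⟩ := hinv m hm
    have heq2 : lpow t d = n * m' := by
      calc lpow t d = lpow t d * 1 := (qmul_one _).symm
      _ = lpow t d * (m * m') := by rw [hmm']
      _ = (lpow t d * m) * m' := cen4 hm' _ _
      _ = n * m' := by rw [heq]
    rw [heq2]
    exact mul_central hn hm'
  -- the injection Fin 3 × center → Q
  have main : ∀ (i j : Fin 3) (m n : {x // x ∈ loopCenter Q}), i.val ≤ j.val →
      lpow t i.val * m.val = lpow t j.val * n.val → i = j ∧ m = n := by
    intro i j m n hij heq
    have hsplit : lpow t j.val = lpow t i.val * lpow t (j.val - i.val) := by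
      rw [← lpow_add hbol, Nat.add_sub_cancel' hij]
    rw [hsplit] at heq
    have heq3 : lpow t i.val * m.val
        = lpow t i.val * (lpow t (j.val - i.val) * n.val) := by
      rw [cen4 n.2]; exact heq
    have heq2 : m.val = lpow t (j.val - i.val) * n.val := qmul_left_cancel heq3
    have hd0 : j.val - i.val = 0 := hkey _ (by omega) n.val m.val n.2 m.2 heq2.symm
    have hij' : i = j := Fin.ext (by omega)
    subst hij'
    refine ⟨rfl, Subtype.ext ?_⟩
    rw [hd0, lpow_zero, qone_mul] at heq2
    exact heq2
  have hinjf : Function.Injective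
      (fun p : Fin 3 × {x // x ∈ loopCenter Q} => lpow t p.1.val * p.2.val) := by
    rintro ⟨i, m⟩ ⟨j, n⟩ h
    simp only at h
    rcases Nat.le_total i.val j.val with h1 | h1
    · obtain ⟨hij, hmn⟩ := main i j m n h1 h
      rw [hij, hmn]
    · obtain ⟨hij, hmn⟩ := main j i n m h1 h.symm
      rw [hij, hmn]
  -- c-powers in N
  have hckey : ∀ d : ℕ, d < 3 → lpow c d ∈ N → d = 0 := by
    intro d hd hmem
    rcases Nat.eq_zero_or_pos d with h0 | h0
    · exact h0
    exfalso
    interval_cases d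
    · rw [lpow_one'] at hmem; exact hcN hmem
    · obtain ⟨oc, hocpos, hoc1, hocodd⟩ := exists_odd_order hbol hcard c
      have h2m : 2 * ((oc + 1) / 2) = oc + 1 := by omega
      have hceq : lpow (lpow c 2) ((oc + 1) / 2) = c := by
        rw [lpow_lpow hbol, h2m, lpow_succ, hoc1, qone_mul]
      exact hcN (hceq ▸ lpow_memN hsub hmem ((oc + 1) / 2))
  -- injection Fin 3 × Fin 3 → center
  have main2 : ∀ (s s' : Fin 3) (i j : Fin 3), i.val ≤ j.val →
      apow a s.val * lpow c i.val = apow a s'.val * lpow c j.val → s = s' ∧ i = j := by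
    intro s s' i j hij heq
    have hcc : ∀ k : ℕ, lpow c k ∈ loopCenter Q := lpow_central hc
    have hsplit : lpow c j.val = lpow c (j.val - i.val) * lpow c i.val := by
      rw [← lpow_add hbol, Nat.sub_add_cancel hij]
    rw [hsplit, cen4 (hcc i.val)] at heq
    have heq2 : apow a s.val = apow a s'.val * lpow c (j.val - i.val) :=
      qmul_right_cancel heq
    have heq3 : apow a s'.val * lpow c (j.val - i.val)
        = apow a s'.val * apow a ((s.val : ZMod 3) - (s'.val : ZMod 3)) := by
      rw [← heq2, ← apow_add hbol ha3]
      congr 1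
      ring
    have heq4 : lpow c (j.val - i.val) = apow a ((s.val : ZMod 3) - (s'.val : ZMod 3)) :=
      qmul_left_cancel heq3
    have hd0 : j.val - i.val = 0 := by
      apply hckey _ (by omega)
      rw [heq4]
      exact apow_memN hsub haN _
    have hij' : i = j := Fin.ext (by omega)
    have hs : s = s' := by
      rw [hd0, lpow_zero] at heq4
      have h5 : apow a ((s.val : ZMod 3) - (s'.val : ZMod 3)) = apow a 0 := by
        rw [← heq4, apow_zero]
      have h6 := apow_inj h1a h1aa haaa h5
      have h7 : (s.val : ZMod 3) = (s'.val : ZMod 3) := by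
        have : (s.val : ZMod 3) - (s'.val : ZMod 3) = 0 := h6
        linear_combination this
      have h8 : s.val % 3 = s'.val % 3 := by
        have := congrArg ZMod.val h7
        rwa [ZMod.val_natCast, ZMod.val_natCast] at this
      exact Fin.ext (by omega)
    exact ⟨hs, hij'⟩
  have hinjg : Function.Injective
      (fun p : Fin 3 × Fin 3 =>
        (⟨apow a p.1.val * lpow c p.2.val,
          mul_central (hcent _) (lpow_central hc _)⟩ : {x // x ∈ loopCenter Q})) := by
    rintro ⟨s, i⟩ ⟨s', j⟩ h
    simp only [Subtype.mk.injEq] at h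
    rcases Nat.le_total i.val j.val with h1 | h1
    · obtain ⟨hs, hij⟩ := main2 s s' i j h1 h
      rw [hs, hij]
    · obtain ⟨hs, hij⟩ := main2 s' s j i h1 h.symm
      rw [hs, hij]
  -- cardinalities
  haveI : Finite {x // x ∈ loopCenter Q} := Subtype.finite
  have h9 : 9 ≤ Nat.card {x // x ∈ loopCenter Q} := by
    have := Nat.card_le_card_of_injective _ hinjg
    simpa using this
  have h27 : Nat.card (Fin 3 × {x // x ∈ loopCenter Q}) ≤ 27 := by
    have := Nat.card_le_card_of_injective _ hinjf
    rwa [hcard] at this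
  have hprod : Nat.card (Fin 3 × {x // x ∈ loopCenter Q})
      = 3 * Nat.card {x // x ∈ loopCenter Q} := by
    rw [Nat.card_prod]
    congr 1
    simp
  have hz9 : Nat.card {x // x ∈ loopCenter Q} = 9 := by
    rw [hprod] at h27; omega
  have hsurj : Function.Surjective
      (fun p : Fin 3 × {x // x ∈ loopCenter Q} => lpow t p.1.val * p.2.val) := by
    have hb := (Nat.bijective_iff_injective_and_card
      (fun p : Fin 3 × {x // x ∈ loopCenter Q} => lpow t p.1.val * p.2.val)).2
      ⟨hinjf, by rw [hprod, hz9, hcard]⟩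
    exact hb.2
  have hrep : ∀ q : Q, ∃ (i : ℕ) (n : Q), n ∈ loopCenter Q ∧ q = lpow t i * n := by
    intro q
    obtain ⟨⟨i, m⟩, hq⟩ := hsurj q
    exact ⟨i.val, m.val, m.2, hq.symm⟩
  have hMUL : ∀ (i j : ℕ) (n m : Q), n ∈ loopCenter Q → m ∈ loopCenter Q →
      (lpow t i * n) * (lpow t j * m) = lpow t (i + j) * (n * m) := by
    intro i j n m hn hm
    calc (lpow t i * n) * (lpow t j * m) = ((lpow t i * n) * lpow t j) * m := cen4 hm _ _
    _ = (lpow t i * (n * lpow t j)) * m := by rw [← cen3 hn]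
    _ = (lpow t i * (lpow t j * n)) * m := by rw [cen1 hn]
    _ = ((lpow t i * lpow t j) * n) * m := by rw [cen4 hn]
    _ = (lpow t (i + j) * n) * m := by rw [← lpow_add hbol]
    _ = lpow t (i + j) * (n * m) := (cen4 hm _ _).symm
  apply hna
  constructor
  · intro x y z
    obtain ⟨i, n, hn, rfl⟩ := hrep x
    obtain ⟨j, m, hm, rfl⟩ := hrep y
    obtain ⟨k, p, hp, rfl⟩ := hrep z
    rw [hMUL j k m p hm hp, hMUL i (j + k) n (m * p) hn (mul_central hm hp),
        hMUL i j n m hn hm, hMUL (i + j) k (n * m) p (mul_central hn hm) hp,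
        ← Nat.add_assoc, cen2 hn m p]
  · intro x y
    obtain ⟨i, n, hn, rfl⟩ := hrep x
    obtain ⟨j, m, hm, rfl⟩ := hrep y
    rw [hMUL i j n m hn hm, hMUL j i m n hm hn, Nat.add_comm, cen1 hn m]
end PartII
/-- In a right Bol loop of order 27 which is not an abelian group,
every normal subloop of order 3 equals the center. -/
theorem stmt12 (Q : Type*) [QLoop Q] (hbol : IsRightBol Q)
    (hcard : Nat.card Q = 27)
    (hna : ¬ ((∀ x y z : Q, x * (y * z) = (x * y) * z) ∧ (∀ x y : Q, x * y = y * x)))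
    (N : Set Q) (hN : IsNormalSubloop N) (hNcard : N.ncard = 3) :
    N = loopCenter Q := by
  haveI : Finite Q := Nat.finite_of_card_ne_zero (by rw [hcard]; omega)
  have hsub := hN.1
  have h1N : (1 : Q) ∈ N := hsub.one_mem
  obtain ⟨a, haN, h1a⟩ : ∃ a ∈ N, a ≠ 1 := by
    by_contra h
    push_neg at h
    have hsub1 : N ⊆ {1} := fun x hx => h x hx
    have := Set.ncard_le_ncard hsub1 (Set.finite_singleton 1)
    rw [hNcard, Set.ncard_singleton] at this
    omega
  have h1aa : a * a ≠ 1 := fun h => no_involution hbol hcard h1a h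
  have haaa : a * a ≠ a := by
    intro h
    apply h1a
    apply qmul_right_cancel (a := a)
    rw [h, qone_mul]
  have hNrep : N = {1, a, a * a} := by
    have hss : ({1, a, a * a} : Set Q) ⊆ N := by
      intro x hx
      rcases hx with rfl | rfl | rfl
      · exact h1N
      · exact haN
      · exact hsub.mul_mem haN haN
    have hcard3 : ({1, a, a * a} : Set Q).ncard = 3 := by
      rw [Set.ncard_eq_three]
      exact ⟨1, a, a * a, Ne.symm h1a, Ne.symm h1aa, Ne.symm haaa, rfl⟩
    exact (Set.eq_of_subset_of_ncard_le hss (by rw [hNcard, hcard3]) (Set.toFinite N)).symm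
  have ha3 : lpow a 3 = 1 := by
    have h3mem : lpow a 3 ∈ N := lpow_memN hsub haN 3
    have hl3 : lpow a 3 = (a * a) * a := by
      rw [lpow_succ, lpow_succ, lpow_one']
    rw [hNrep] at h3mem
    rcases h3mem with h | h | h
    · exact h
    · exfalso
      apply h1aa
      apply qmul_right_cancel (a := a)
      rw [← hl3, h, qone_mul]
    · exfalso
      apply h1a
      apply qmul_left_cancel (a := a * a)
      rw [← hl3, h, qmul_one]
  have hcent : ∀ i : ZMod 3, apow a i ∈ loopCenter Q :=
    apow_central hbol hcard hN haN hNrep ha3 h1a h1aa haaa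
  have hNsubZ : N ⊆ loopCenter Q := by
    intro n hn
    obtain ⟨i, rfl⟩ := memN_rep hNrep hn
    exact hcent i
  have hZsubN : loopCenter Q ⊆ N :=
    center_subset_N hbol hcard hna hsub haN hNrep ha3 h1a h1aa haaa hcent
  exact Set.Subset.antisymm hNsubZ hZsubN
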